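/- For the multiset of weights dh^K(p^{-λ}) indexed by partitions λ ∈ Λ_m (at most m parts), given by dh^K(p^{-λ}) = [m choose m−λ'₁, λ'₁−λ'₂, ...]_Q⁻¹-multinomial · ([n−m]!/([m−λ'₁]!·[n−2m]!)) / [n choose m] · Q^{−∑(λ'_i)² − (n−2m)∑λ'_i} (with Q = p^r and [j] = 1 − Q^{-j}), the total mass is 1: ∑_{λ ∈ Λ_m} dh^K(p^{-λ}) = 1. -/

import Mathlib

open Finset


/-- `[j]! = ∏_{k=1}^{j} (1 - Q^{-k})`. -/
noncomputable def brFact (Q : ℝ) (j : ℕ) : ℝ := ∏ k ∈ Finset.range j, (1 - Q⁻¹ ^ (k + 1))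

/-- `(q;q)_j` -/
noncomputable def pq (q : ℝ) (j : ℕ) : ℝ := ∏ k ∈ Finset.range j, (1 - q ^ (k + 1))

lemma brFact_eq_pq (Q : ℝ) (j : ℕ) : brFact Q j = pq Q⁻¹ j := rfl

lemma pq_pos {q : ℝ} (hq0 : 0 < q) (hq1 : q < 1) (j : ℕ) : 0 < pq q j := by
  apply Finset.prod_pos
  intro k _
  have : q ^ (k+1) < 1 := pow_lt_one₀ hq0.le hq1 (Nat.succ_ne_zero k)
  linarith

lemma pq_ne {q : ℝ} (hq0 : 0 < q) (hq1 : q < 1) (j : ℕ) : pq q j ≠ 0 :=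
  (pq_pos hq0 hq1 j).ne'

lemma pq_succ (q : ℝ) (j : ℕ) : pq q (j + 1) = pq q j * (1 - q ^ (j + 1)) :=
  Finset.prod_range_succ _ _

lemma pq_le_one {q : ℝ} (hq0 : 0 < q) (hq1 : q < 1) (j : ℕ) : pq q j ≤ 1 := by
  apply Finset.prod_le_one
  · intro k _
    have : q ^ (k+1) < 1 := pow_lt_one₀ hq0.le hq1 (Nat.succ_ne_zero k)
    linarith
  · intro k _
    have : 0 < q ^ (k+1) := pow_pos hq0 _
    linarith

lemma pq_antitone {q : ℝ} (hq0 : 0 < q) (hq1 : q < 1) : Antitone (pq q) := by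
  apply antitone_nat_of_succ_le
  intro j
  rw [pq_succ]
  have h1 : 0 < q ^ (j+1) := pow_pos hq0 _
  nlinarith [pq_pos hq0 hq1 j]

/-- `pq (a+d) = pq a * ∏_{j<d} (1 - q^(a+1+j))` -/
lemma pq_add (q : ℝ) (a d : ℕ) :
    pq q (a + d) = pq q a * ∏ j ∈ Finset.range d, (1 - q ^ (a + 1 + j)) := by
  induction d with
  | zero => simp [pq]
  | succ d ih =>
      rw [← add_assoc, pq_succ, ih, Finset.prod_range_succ, ← mul_assoc]
      rw [show a + d + 1 = a + 1 + d by omega]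

/-- `pq m ^ d ≤ pq d` for `d ≤ m`. -/
lemma pq_pow_le {q : ℝ} (hq0 : 0 < q) (hq1 : q < 1) {d m : ℕ} (h : d ≤ m) :
    pq q m ^ d ≤ pq q d := by
  rcases Nat.eq_zero_or_pos d with hd | hd
  · subst hd; simp [pq]
  · calc pq q m ^ d ≤ pq q m ^ 1 :=
          pow_le_pow_of_le_one (pq_pos hq0 hq1 m).le (pq_le_one hq0 hq1 m) hd
    _ = pq q m := pow_one _
    _ ≤ pq q d := pq_antitone hq0 hq1 h

/-- Gaussian binomial. -/
noncomputable def bb (q : ℝ) (a k : ℕ) : ℝ :=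
  if k ≤ a then pq q a / (pq q k * pq q (a - k)) else 0

lemma pq_zero (q : ℝ) : pq q 0 = 1 := by simp [pq]

lemma bb_zero {q : ℝ} (hq0 : 0 < q) (hq1 : q < 1) (a : ℕ) : bb q a 0 = 1 := by
  simp [bb, pq_zero, div_self (pq_ne hq0 hq1 a)]

lemma bb_self {q : ℝ} (hq0 : 0 < q) (hq1 : q < 1) (a : ℕ) : bb q a a = 1 := by
  simp [bb, pq_zero, div_self (pq_ne hq0 hq1 a)]

lemma bb_of_gt {q : ℝ} {a k : ℕ} (h : a < k) : bb q a k = 0 := by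
  simp [bb, Nat.not_le.mpr h]

lemma bb_eq (q : ℝ) {a k : ℕ} (h : k ≤ a) :
    bb q a k = pq q a / (pq q k * pq q (a - k)) := by simp [bb, h]

lemma bb_nonneg {q : ℝ} (hq0 : 0 < q) (hq1 : q < 1) (a k : ℕ) : 0 ≤ bb q a k := by
  unfold bb
  split
  · have := pq_pos hq0 hq1 a
    have := pq_pos hq0 hq1 k
    have := pq_pos hq0 hq1 (a - k)
    positivity
  · exact le_refl 0

lemma bb_pascal {q : ℝ} (hq0 : 0 < q) (hq1 : q < 1) (a k : ℕ) :
    bb q (a + 1) (k + 1) = bb q a (k + 1) + q ^ (a - k) * bb q a k := by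
  rcases lt_trichotomy k a with hk | hk | hk
  · obtain ⟨d, hd⟩ : ∃ d, a = k + d + 1 := ⟨a - k - 1, by omega⟩
    subst hd
    rw [bb_eq q (by omega), bb_eq q (by omega), bb_eq q (by omega)]
    have e1 : k + d + 1 + 1 - (k + 1) = d + 1 := by omega
    have e2 : k + d + 1 - (k + 1) = d := by omega
    have e3 : k + d + 1 - k = d + 1 := by omega
    rw [e1, e2, e3]
    have hp1 := pq_succ q (k + d + 1)
    have hp2 := pq_succ q d
    have hp3 := pq_succ q k
    have h2 := pq_ne hq0 hq1 (d+1)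
    have h3 := pq_ne hq0 hq1 d
    have h4 := pq_ne hq0 hq1 k
    have h5 := pq_ne hq0 hq1 (k+d+1)
    have h6 := pq_ne hq0 hq1 (k+1)
    rw [hp1, hp2, hp3] at *
    have hd1 : 1 - q ^ (d + 1) ≠ 0 := right_ne_zero_of_mul h2
    have hk1 : 1 - q ^ (k + 1) ≠ 0 := right_ne_zero_of_mul h6
    rw [show k + d + 1 + 1 = (d + 1) + (k + 1) by ring, pow_add]
    field_simp
    ring
  · subst hk
    rw [bb_self hq0 hq1, bb_of_gt (by omega), bb_self hq0 hq1]
    simp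
  · rw [bb_of_gt (by omega), bb_of_gt (by omega), bb_of_gt (by omega)]
    simp

section
variable {q : ℝ}

/-- The key telescoping identity `W_c(b) = 1`. -/
lemma W_eq_one (hq0 : 0 < q) (hq1 : q < 1) :
    ∀ (b c : ℕ),
      ∑ k ∈ range (b + 1), bb q b k * q ^ (k * (k + c)) *
        ∏ j ∈ range (b - k), (1 - q ^ (c + k + 1 + j)) = 1 := by
  intro b
  induction b with
  | zero =>
      intro c
      simp [bb_zero hq0 hq1]
  | succ b ih =>
      intro c
      rw [Finset.sum_range_succ']
      -- the k = 0 term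
      have h0 : bb q (b+1) 0 * q ^ (0 * (0 + c)) *
          ∏ j ∈ range (b + 1 - 0), (1 - q ^ (c + 0 + 1 + j)) =
          ∏ j ∈ range (b + 1), (1 - q ^ (c + 1 + j)) := by
        rw [bb_zero hq0 hq1]
        simp only [zero_mul, pow_zero, one_mul, Nat.sub_zero, add_zero]
      rw [h0]
      -- rewrite each shifted term via Pascal
      have hsplit : ∀ k ∈ range (b + 1),
          bb q (b+1) (k+1) * q ^ ((k+1) * ((k+1) + c)) *
            ∏ j ∈ range (b + 1 - (k+1)), (1 - q ^ (c + (k+1) + 1 + j)) =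
          (bb q b (k+1) * q ^ ((k+1) * ((k+1) + c)) *
            ∏ j ∈ range (b - k), (1 - q ^ (c + (k+1) + 1 + j)))
          + q ^ (b + c + 1) * (bb q b k * q ^ (k * (k + (c+1))) *
            ∏ j ∈ range (b - k), (1 - q ^ ((c+1) + k + 1 + j))) := by
        intro k hk
        rw [mem_range] at hk
        rw [bb_pascal hq0 hq1]
        have e1 : b + 1 - (k + 1) = b - k := by omega
        have e2 : b - k + ((k+1) * ((k+1) + c)) = (k * (k + (c+1))) + (b + c + 1) := by
          have : k ≤ b := by omega
          nlinarith [Nat.sub_add_cancel this]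
        have e3 : ∀ j, c + (k+1) + 1 + j = (c+1) + k + 1 + j := by intro j; omega
        rw [e1]
        have : (∏ j ∈ range (b - k), (1 - q ^ (c + (k+1) + 1 + j))) =
            ∏ j ∈ range (b - k), (1 - q ^ ((c+1) + k + 1 + j)) := by
          apply Finset.prod_congr rfl
          intro j _
          rw [e3]
        rw [add_mul, this]
        rw [show q ^ (b - k) * bb q b k * q ^ ((k+1) * ((k+1) + c)) =
          bb q b k * q ^ ((b - k) + ((k+1) * ((k+1) + c))) by rw [pow_add]; ring]
        rw [e2, pow_add]
        ring
      rw [Finset.sum_congr rfl hsplit, Finset.sum_add_distrib]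
      -- second part is q^(b+c+1) * W_{c+1}(b) = q^(b+c+1)
      have hB : ∑ k ∈ range (b + 1), q ^ (b + c + 1) * (bb q b k * q ^ (k * (k + (c+1))) *
          ∏ j ∈ range (b - k), (1 - q ^ ((c+1) + k + 1 + j))) = q ^ (b + c + 1) := by
        rw [← Finset.mul_sum, ih (c+1), mul_one]
      rw [hB]
      -- first part: reattach the k = 0 term to get (1 - q^(c+b+1)) * W_c(b)
      have hA : (∑ k ∈ range (b + 1), bb q b (k+1) * q ^ ((k+1) * ((k+1) + c)) *
            ∏ j ∈ range (b - k), (1 - q ^ (c + (k+1) + 1 + j)))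
          + ∏ j ∈ range (b + 1), (1 - q ^ (c + 1 + j)) = 1 - q ^ (b + c + 1) := by
        have key : ∀ k ∈ range (b + 1), bb q b k * q ^ (k * (k + c)) *
            ∏ j ∈ range (b + 1 - k), (1 - q ^ (c + k + 1 + j)) =
            (1 - q ^ (c + b + 1)) * (bb q b k * q ^ (k * (k + c)) *
            ∏ j ∈ range (b - k), (1 - q ^ (c + k + 1 + j))) := by
          intro k hk
          rw [mem_range] at hk
          have e1 : b + 1 - k = (b - k) + 1 := by omega
          rw [e1, Finset.prod_range_succ]
          have e2 : c + k + 1 + (b - k) = c + b + 1 := by omega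
          rw [e2]
          ring
        have sum1 : ∑ k ∈ range (b + 1 + 1), bb q b k * q ^ (k * (k + c)) *
            ∏ j ∈ range (b + 1 - k), (1 - q ^ (c + k + 1 + j)) = 1 - q ^ (c + b + 1) := by
          rw [Finset.sum_range_succ]
          rw [bb_of_gt (by omega)]
          have : ∑ k ∈ range (b + 1), bb q b k * q ^ (k * (k + c)) *
              ∏ j ∈ range (b + 1 - k), (1 - q ^ (c + k + 1 + j)) =
              ∑ k ∈ range (b + 1), (1 - q ^ (c + b + 1)) * (bb q b k * q ^ (k * (k + c)) *
              ∏ j ∈ range (b - k), (1 - q ^ (c + k + 1 + j))) :=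
            Finset.sum_congr rfl key
          rw [this, ← Finset.mul_sum, ih c, mul_one]
          simp
        rw [Finset.sum_range_succ'] at sum1
        have h00 : bb q b 0 * q ^ (0 * (0 + c)) *
            ∏ j ∈ range (b + 1 - 0), (1 - q ^ (c + 0 + 1 + j)) =
            ∏ j ∈ range (b + 1), (1 - q ^ (c + 1 + j)) := by
          rw [bb_zero hq0 hq1]
          simp only [zero_mul, pow_zero, one_mul, Nat.sub_zero, add_zero]
        rw [h00] at sum1
        rw [show c + b + 1 = b + c + 1 by ring] at sum1
        have e : ∑ k ∈ range (b + 1), bb q b (k+1) * q ^ ((k+1) * ((k+1) + c)) *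
              ∏ j ∈ range (b + 1 - (k+1)), (1 - q ^ (c + (k+1) + 1 + j)) =
            ∑ k ∈ range (b + 1), bb q b (k+1) * q ^ ((k+1) * ((k+1) + c)) *
              ∏ j ∈ range (b - k), (1 - q ^ (c + (k+1) + 1 + j)) := by
          apply Finset.sum_congr rfl
          intro k hk
          rw [show b + 1 - (k+1) = b - k by omega]
        rw [e] at sum1
        exact sum1
      linarith [hA]
end

section
variable {q : ℝ}

/-- q-Vandermonde: `∑_k [a,k][b,t-k] q^(k(b-t+k)) = [a+b,t]` for `t ≤ b`. -/
lemma vmonde (hq0 : 0 < q) (hq1 : q < 1) (b : ℕ) :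
    ∀ a t, t ≤ b →
      ∑ k ∈ range (t + 1), bb q a k * bb q b (t - k) * q ^ (k * (b - t + k)) =
        bb q (a + b) t := by
  intro a
  induction a with
  | zero =>
      intro t ht
      rw [Finset.sum_eq_single 0]
      · simp [bb_zero hq0 hq1]
      · intro k _ hk
        rw [bb_of_gt (by omega)]
        ring
      · intro h
        exact absurd (Finset.mem_range.mpr (by omega)) h
  | succ a ih =>
      intro t ht
      rcases t with _ | s
      · simp [bb_zero hq0 hq1]
      · have hs : s ≤ b := by omega
        have hsb : s + 1 ≤ b := ht
        rw [Finset.sum_range_succ']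
        have hterm : ∀ k ∈ range (s + 1),
            bb q (a+1) (k+1) * bb q b (s + 1 - (k+1)) * q ^ ((k+1) * (b - (s+1) + (k+1))) =
            bb q a (k+1) * bb q b (s + 1 - (k+1)) * q ^ ((k+1) * (b - (s+1) + (k+1)))
            + q ^ (a + b - s) * (bb q a k * bb q b (s - k) * q ^ (k * (b - s + k))) := by
          intro k hk
          rw [Finset.mem_range] at hk
          rw [bb_pascal hq0 hq1]
          rw [show s + 1 - (k + 1) = s - k by omega]
          by_cases hka : k ≤ a
          · obtain ⟨d, hd⟩ : ∃ d, a = k + d := ⟨a - k, by omega⟩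
            obtain ⟨u, hu⟩ : ∃ u, b = s + 1 + u := ⟨b - s - 1, by omega⟩
            subst hd hu
            rw [show k + d - k = d by omega,
              show s + 1 + u - (s + 1) + (k + 1) = u + k + 1 by omega,
              show k + d + (s + 1 + u) - s = d + u + k + 1 by omega,
              show s + 1 + u - s + k = u + k + 1 by omega]
            rw [show (k+1) * (u + k + 1) = k * (u + k + 1) + (u + k + 1) by ring]
            rw [show d + u + k + 1 = d + (u + k + 1) by ring]
            rw [pow_add, pow_add]
            ring
          · have h1 : bb q a k = 0 := bb_of_gt (by omega)
            have h2 : bb q a (k+1) = 0 := bb_of_gt (by omega)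
            rw [h1, h2]
            ring
        rw [Finset.sum_congr rfl hterm, Finset.sum_add_distrib]
        have hsecond : ∑ k ∈ range (s + 1),
            q ^ (a + b - s) * (bb q a k * bb q b (s - k) * q ^ (k * (b - s + k))) =
            q ^ (a + b - s) * bb q (a + b) s := by
          rw [← Finset.mul_sum, ih s hs]
        rw [hsecond]
        have hexpand := Finset.sum_range_succ'
          (fun k => bb q a k * bb q b (s + 1 - k) * q ^ (k * (b - (s+1) + k))) (s + 1)
        rw [ih (s+1) hsb] at hexpand
        simp only [Nat.sub_zero, zero_mul, pow_zero, mul_one, one_mul] at hexpand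
        have hz1 : bb q a 0 = 1 := bb_zero hq0 hq1 a
        have hz2 : bb q (a+1) 0 = 1 := bb_zero hq0 hq1 (a+1)
        have hpas : bb q (a + 1 + b) (s + 1) =
            bb q (a + b) (s + 1) + q ^ (a + b - s) * bb q (a + b) s := by
          rw [show a + 1 + b = (a + b) + 1 by ring, bb_pascal hq0 hq1]
        rw [hpas]
        rw [hz1] at hexpand
        rw [hz2]
        simp only [Nat.sub_zero, zero_mul, pow_zero, mul_one, one_mul]
        linarith [hexpand]
end

/-- The conjugate partition `λ'_i = #{j : λ_j ≥ i}`. -/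
def conjP {m : ℕ} (lam : Fin m → ℕ) (i : ℕ) : ℕ :=
  (Finset.univ.filter fun j : Fin m => i ≤ lam j).card

section D
variable {w : ℕ}

lemma conjP_le (f : Fin w → ℕ) (i : ℕ) : conjP f i ≤ w := by
  classical
  calc (Finset.univ.filter fun j : Fin w => i ≤ f j).card ≤ Finset.univ.card :=
        Finset.card_filter_le _ _
  _ = w := by simp

lemma conjP_anti (f : Fin w → ℕ) : Antitone (conjP f) := by
  intro i i' h
  apply Finset.card_le_card
  intro j hj
  simp only [Finset.mem_filter, Finset.mem_univ, true_and] at *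
  omega

lemma conjP_zero (f : Fin w → ℕ) : conjP f 0 = w := by
  simp [conjP]

/-- characterization for antitone tuples -/
lemma lt_conjP_iff {f : Fin w → ℕ} (hf : Antitone f) (i : ℕ) (j : Fin w) :
    (j : ℕ) < conjP f i ↔ i ≤ f j := by
  classical
  constructor
  · intro h
    by_contra hc
    have hsub : (Finset.univ.filter fun j' : Fin w => i ≤ f j') ⊆ Finset.Iio j := by
      intro j' hj'
      simp only [Finset.mem_filter, Finset.mem_univ, true_and] at hj'
      simp only [Finset.mem_Iio]
      by_contra hge
      exact hc (le_trans hj' (hf (not_lt.mp hge)))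
    have := Finset.card_le_card hsub
    rw [Fin.card_Iio] at this
    exact absurd h (by unfold conjP; omega)
  · intro h
    have hsub : Finset.Iic j ⊆ (Finset.univ.filter fun j' : Fin w => i ≤ f j') := by
      intro j' hj'
      simp only [Finset.mem_Iic] at hj'
      simp only [Finset.mem_filter, Finset.mem_univ, true_and]
      exact le_trans h (hf hj')
    have := Finset.card_le_card hsub
    rw [Fin.card_Iic] at this
    unfold conjP
    omega

lemma conjP_eq_zero {f : Fin w → ℕ} {i : ℕ} (h : ∀ j, f j < i) : conjP f i = 0 := by
  unfold conjP
  rw [Finset.card_eq_zero, Finset.filter_eq_empty_iff]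
  intro j _
  exact not_le.mpr (h j)

lemma conjP_sup_succ (f : Fin w → ℕ) {i : ℕ} (hi : Finset.univ.sup f < i) : conjP f i = 0 :=
  conjP_eq_zero (fun j => lt_of_le_of_lt (Finset.le_sup (Finset.mem_univ j)) hi)

/-- telescoping sum of truncated differences of an antitone sequence -/
lemma sum_sub_telescope {x : ℕ → ℕ} (hx : Antitone x) (N : ℕ) :
    ∑ i ∈ Finset.Icc 1 N, (x i - x (i + 1)) = x 1 - x (N + 1) := by
  induction N with
  | zero => simp
  | succ N ih =>
      rw [Finset.sum_Icc_succ_top (by omega), ih]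
      have h1 : x (N + 1 + 1) ≤ x (N + 1) := hx (by omega)
      have h2 : x (N + 1) ≤ x 1 := by
        rcases Nat.eq_zero_or_pos N with h | h
        · subst h; exact le_refl _
        · exact hx (by omega)
      omega

/-- the conjugate sum identity `∑_{i=1}^{N} λ'_i = ∑_j λ_j` for `N ≥ max λ`. -/
lemma sum_conjP {f : Fin w → ℕ} {N : ℕ} (hN : ∀ j, f j ≤ N) :
    ∑ i ∈ Finset.Icc 1 N, conjP f i = ∑ j, f j := by
  classical
  unfold conjP
  have : ∀ i, (Finset.univ.filter fun j : Fin w => i ≤ f j).card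
      = ∑ j : Fin w, if i ≤ f j then 1 else 0 := by
    intro i; rw [Finset.card_filter]
  rw [Finset.sum_congr rfl (fun i _ => this i), Finset.sum_comm]
  apply Finset.sum_congr rfl
  intro j _
  rw [← Finset.card_filter]
  have : (Finset.Icc 1 N).filter (fun i => i ≤ f j) = Finset.Icc 1 (f j) := by
    ext i
    simp only [Finset.mem_filter, Finset.mem_Icc]
    have := hN j
    omega
  rw [this, Nat.card_Icc]
  omega

/-- add `1` to the first `b` parts, `0` elsewhere -/
def peel {w : ℕ} (b : ℕ) (hb : b ≤ w) (g : Fin b → ℕ) : Fin w → ℕ :=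
  fun j => if h : (j : ℕ) < b then g ⟨j, h⟩ + 1 else 0

lemma peel_antitone {b : ℕ} (hb : b ≤ w) {g : Fin b → ℕ} (hg : Antitone g) :
    Antitone (peel b hb g) := by
  intro j j' hjj
  unfold peel
  by_cases h' : (j' : ℕ) < b
  · have h : (j : ℕ) < b := lt_of_le_of_lt (by exact_mod_cast hjj) h'
    rw [dif_pos h, dif_pos h']
    have : g ⟨j', h'⟩ ≤ g ⟨j, h⟩ := hg (by exact_mod_cast hjj)
    omega
  · rw [dif_neg h']
    omega

lemma conjP_peel {b : ℕ} (hb : b ≤ w) (g : Fin b → ℕ) (i : ℕ) :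
    conjP (peel b hb g) (i + 1) = conjP g i := by
  classical
  unfold conjP
  symm
  apply Finset.card_bij (fun (j : Fin b) _ => Fin.castLE hb j)
  · intro j hj
    simp only [Finset.mem_filter, Finset.mem_univ, true_and] at hj ⊢
    simp only [peel]
    have hc : ((Fin.castLE hb j : Fin w) : ℕ) < b := by
      simpa [Fin.castLE] using j.isLt
    rw [dif_pos hc]
    have he : (⟨((Fin.castLE hb j : Fin w) : ℕ), hc⟩ : Fin b) = j :=
      Fin.ext (by simp [Fin.castLE])
    rw [he]
    omega
  · intro j1 h1 j2 h2 he
    exact Fin.ext (by simpa [Fin.castLE] using congrArg Fin.val he)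
  · intro jw hjw
    simp only [Finset.mem_filter, Finset.mem_univ, true_and] at hjw
    simp only [peel] at hjw
    have hc : (jw : ℕ) < b := by
      by_contra hc
      rw [dif_neg hc] at hjw
      omega
    rw [dif_pos hc] at hjw
    refine ⟨⟨(jw : ℕ), hc⟩, ?_, ?_⟩
    · simp only [Finset.mem_filter, Finset.mem_univ, true_and]
      omega
    · exact Fin.ext (by simp [Fin.castLE])

lemma conjP_peel_one {b : ℕ} (hb : b ≤ w) (g : Fin b → ℕ) :
    conjP (peel b hb g) 1 = b := by
  have := conjP_peel hb g 0
  rwa [conjP_zero] at this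

lemma sup_peel {b : ℕ} (hb : b ≤ w) (g : Fin b → ℕ) (hb1 : 1 ≤ b) :
    Finset.univ.sup (peel b hb g) = Finset.univ.sup g + 1 := by
  apply le_antisymm
  · apply Finset.sup_le
    intro j _
    unfold peel
    by_cases hc : (j : ℕ) < b
    · rw [dif_pos hc]
      have : g ⟨j, hc⟩ ≤ Finset.univ.sup g := Finset.le_sup (Finset.mem_univ _)
      omega
    · rw [dif_neg hc]
      omega
  · have hne : (Finset.univ : Finset (Fin b)).Nonempty := by
      rw [Finset.univ_nonempty_iff]
      exact Fin.pos_iff_nonempty.mp (by omega)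
    obtain ⟨j0, _, hj0⟩ := Finset.exists_mem_eq_sup Finset.univ hne g
    have hc : ((Fin.castLE hb j0 : Fin w) : ℕ) < b := by simpa [Fin.castLE] using j0.isLt
    have : peel b hb g (Fin.castLE hb j0) = g j0 + 1 := by
      unfold peel
      rw [dif_pos hc]
      have he : (⟨((Fin.castLE hb j0 : Fin w) : ℕ), hc⟩ : Fin b) = j0 :=
        Fin.ext (by simp [Fin.castLE])
      rw [he]
    calc Finset.univ.sup g + 1 = g j0 + 1 := by rw [hj0]
    _ = peel b hb g (Fin.castLE hb j0) := this.symm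
    _ ≤ Finset.univ.sup (peel b hb g) := Finset.le_sup (Finset.mem_univ _)

lemma peel_zero (hb : (0:ℕ) ≤ w) (g : Fin 0 → ℕ) (j : Fin w) : peel 0 hb g j = 0 := by
  unfold peel
  rw [dif_neg (by omega)]
end D

/-- abstract product/sum shift over `Icc 1 (N+1)` -/
lemma prod_Icc_one_succ {M : Type*} [CommMonoid M] (h : ℕ → M) (N : ℕ) :
    ∏ i ∈ Finset.Icc 1 (N + 1), h i = h 1 * ∏ i ∈ Finset.Icc 1 N, h (i + 1) := by
  induction N with
  | zero => simp
  | succ N ih =>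
      rw [Finset.prod_Icc_succ_top (by omega), ih,
        Finset.prod_Icc_succ_top (a := 1) (b := N) (by omega), mul_assoc]

lemma sum_Icc_one_succ {M : Type*} [AddCommMonoid M] (h : ℕ → M) (N : ℕ) :
    ∑ i ∈ Finset.Icc 1 (N + 1), h i = h 1 + ∑ i ∈ Finset.Icc 1 N, h (i + 1) := by
  induction N with
  | zero => simp
  | succ N ih =>
      rw [Finset.sum_Icc_succ_top (by omega), ih,
        Finset.sum_Icc_succ_top (a := 1) (b := N) (by omega), add_assoc]

/-- the self-similar part of the weight -/
noncomputable def core (q : ℝ) (c w : ℕ) (f : Fin w → ℕ) : ℝ :=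
  pq q w / (pq q (w - conjP f 1) *
      ∏ i ∈ Finset.Icc 1 (Finset.univ.sup f), pq q (conjP f i - conjP f (i + 1))) *
    q ^ (∑ i ∈ Finset.Icc 1 (Finset.univ.sup f), (conjP f i) ^ 2 +
      c * ∑ i ∈ Finset.Icc 1 (Finset.univ.sup f), conjP f i)

section E
variable {q : ℝ}

lemma core_zero_width (hq0 : 0 < q) (hq1 : q < 1) (c : ℕ) (g : Fin 0 → ℕ) :
    core q c 0 g = 1 := by
  unfold core
  have h1 : conjP g 1 = 0 := by
    have := conjP_le g 1
    omega
  have h2 : Finset.univ.sup g = 0 := by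
    simp [Finset.univ_eq_empty]
  rw [h1, h2]
  simp [pq_zero, div_self (pq_ne hq0 hq1 0)]

/-- The key pointwise factorization `core (peel b g) = [w,b] q^(b(b+c)) core g`. -/
lemma core_peel (hq0 : 0 < q) (hq1 : q < 1) {w : ℕ} (c : ℕ) {b : ℕ} (hb : b ≤ w)
    (g : Fin b → ℕ) :
    core q c w (peel b hb g) = bb q w b * q ^ (b * (b + c)) * core q c b g := by
  rcases Nat.eq_zero_or_pos b with hb0 | hb1
  · subst hb0
    have hF : core q c w (peel 0 hb g) = 1 := by
      unfold core
      have h1 : conjP (peel 0 hb g) 1 = 0 := conjP_peel_one hb g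
      have h2 : Finset.univ.sup (peel 0 hb g) = 0 := by
        apply le_antisymm _ (Nat.zero_le _)
        apply Finset.sup_le
        intro j _
        rw [peel_zero hb g j]
      rw [h1, h2]
      simp [pq_zero, div_self (pq_ne hq0 hq1 w)]
    rw [hF, core_zero_width hq0 hq1 c g, bb_zero hq0 hq1]
    simp
  · -- b ≥ 1
    set F := peel b hb g with hFdef
    set N := Finset.univ.sup g with hNdef
    have hsup : Finset.univ.sup F = N + 1 := sup_peel hb g hb1
    have hc1 : conjP F 1 = b := conjP_peel_one hb g
    have hcs : ∀ i, conjP F (i + 1) = conjP g i := conjP_peel hb g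
    unfold core
    rw [hsup, hc1]
    -- shift the three Icc sums/products
    rw [prod_Icc_one_succ (fun i => pq q (conjP F i - conjP F (i + 1))) N]
    rw [sum_Icc_one_succ (fun i => (conjP F i) ^ 2) N]
    rw [sum_Icc_one_succ (fun i => conjP F i) N]
    have e1 : ∀ i, conjP F (i + 1 + 1) = conjP g (i + 1) := fun i => hcs (i + 1)
    have hprod : (∏ i ∈ Finset.Icc 1 N, pq q (conjP F (i+1) - conjP F (i + 1 + 1))) =
        ∏ i ∈ Finset.Icc 1 N, pq q (conjP g i - conjP g (i + 1)) := by
      apply Finset.prod_congr rfl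
      intro i _
      rw [hcs i, e1 i]
    have hsum2 : (∑ i ∈ Finset.Icc 1 N, (conjP F (i+1)) ^ 2) =
        ∑ i ∈ Finset.Icc 1 N, (conjP g i) ^ 2 := by
      apply Finset.sum_congr rfl
      intro i _
      rw [hcs i]
    have hsum1 : (∑ i ∈ Finset.Icc 1 N, conjP F (i+1)) =
        ∑ i ∈ Finset.Icc 1 N, conjP g i := by
      apply Finset.sum_congr rfl
      intro i _
      rw [hcs i]
    rw [hprod, hsum2, hsum1, hc1, hcs 1]
    -- now pure algebra
    set S2 := ∑ i ∈ Finset.Icc 1 N, (conjP g i) ^ 2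
    set S1 := ∑ i ∈ Finset.Icc 1 N, conjP g i
    set P := ∏ i ∈ Finset.Icc 1 N, pq q (conjP g i - conjP g (i + 1)) with hP
    have hPne : P ≠ 0 := by
      rw [hP]
      exact Finset.prod_ne_zero_iff.mpr (fun i _ => pq_ne hq0 hq1 _)
    have hexp : b ^ 2 + S2 + c * (b + S1) = b * (b + c) + (S2 + c * S1) := by ring
    rw [hexp, pow_add, bb_eq q hb]
    have h1 := pq_ne hq0 hq1 (w - b)
    have h2 := pq_ne hq0 hq1 b
    have h3 := pq_ne hq0 hq1 (b - conjP g 1)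
    have h4 := pq_ne hq0 hq1 w
    field_simp
end E

section F
open scoped ENNReal

/-- the peeling map as a map of sigma types -/
def Phi (w : ℕ) : (Σ b : Fin (w+1), {g : Fin (b:ℕ) → ℕ // Antitone g}) →
    {f : Fin w → ℕ // Antitone f} :=
  fun σ => ⟨peel (σ.1 : ℕ) (Nat.lt_succ_iff.mp σ.1.isLt) σ.2.1, peel_antitone _ σ.2.2⟩

lemma Phi_bijective (w : ℕ) : Function.Bijective (Phi w) := by
  constructor
  · rintro ⟨b1, g1, hg1⟩ ⟨b2, g2, hg2⟩ h
    have hv : peel (b1:ℕ) (Nat.lt_succ_iff.mp b1.isLt) g1 =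
        peel (b2:ℕ) (Nat.lt_succ_iff.mp b2.isLt) g2 := congrArg Subtype.val h
    have hb : b1 = b2 := by
      apply Fin.ext
      have e1 := conjP_peel_one (Nat.lt_succ_iff.mp b1.isLt) g1
      have e2 := conjP_peel_one (Nat.lt_succ_iff.mp b2.isLt) g2
      rw [← e1, ← e2, hv]
    subst hb
    have hg : g1 = g2 := by
      funext j
      have := congrFun hv (Fin.castLE (Nat.lt_succ_iff.mp b1.isLt) j)
      unfold peel at this
      have hc : ((Fin.castLE (Nat.lt_succ_iff.mp b1.isLt) j : Fin w) : ℕ) < (b1:ℕ) := by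
        simpa [Fin.castLE] using j.isLt
      rw [dif_pos hc, dif_pos hc] at this
      have he : (⟨((Fin.castLE (Nat.lt_succ_iff.mp b1.isLt) j : Fin w) : ℕ), hc⟩ : Fin (b1:ℕ)) = j :=
        Fin.ext (by simp [Fin.castLE])
      rw [he] at this
      omega
    subst hg
    rfl
  · rintro ⟨f, hf⟩
    have hble : conjP f 1 ≤ w := conjP_le f 1
    refine ⟨⟨⟨conjP f 1, Nat.lt_succ_of_le hble⟩,
      ⟨fun j => f ⟨(j:ℕ), lt_of_lt_of_le j.isLt hble⟩ - 1, ?_⟩⟩, ?_⟩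
    · intro j j' hjj
      have h2 : f ⟨(j':ℕ), lt_of_lt_of_le j'.isLt hble⟩ ≤ f ⟨(j:ℕ), lt_of_lt_of_le j.isLt hble⟩ :=
        hf (by exact_mod_cast hjj)
      exact Nat.sub_le_sub_right h2 1
    · apply Subtype.ext
      funext j
      show peel (conjP f 1) hble (fun j => f ⟨(j:ℕ), lt_of_lt_of_le j.isLt hble⟩ - 1) j = f j
      unfold peel
      by_cases hc : (j : ℕ) < conjP f 1
      · rw [dif_pos hc]
        have h1 : 1 ≤ f j := (lt_conjP_iff hf 1 j).mp hc
        show f j - 1 + 1 = f j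
        omega
      · rw [dif_neg hc]
        have : ¬ (1 ≤ f j) := fun h1 => hc ((lt_conjP_iff hf 1 j).mpr h1)
        omega

/-- total mass of `core` over partitions with at most `b` parts -/
noncomputable def Gb (q : ℝ) (c b : ℕ) : ℝ≥0∞ :=
  ∑' g : {g : Fin b → ℕ // Antitone g}, ENNReal.ofReal (core q c b g.1)

/-- reindexing the sum over partitions by peeling the first column -/
lemma tsum_peel {q : ℝ} (hq0 : 0 < q) (hq1 : q < 1) (c w : ℕ) (D : ℕ → ℝ)
    (hD : ∀ b, 0 ≤ D b) :
    ∑' f : {f : Fin w → ℕ // Antitone f}, ENNReal.ofReal (D (conjP f.1 1) * core q c w f.1)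
      = ∑ b ∈ Finset.range (w+1),
          ENNReal.ofReal (D b * (bb q w b * q ^ (b * (b + c)))) * Gb q c b := by
  have := Equiv.tsum_eq (Equiv.ofBijective (Phi w) (Phi_bijective w))
    (fun f : {f : Fin w → ℕ // Antitone f} => ENNReal.ofReal (D (conjP f.1 1) * core q c w f.1))
  rw [← this]
  have hpt : ∀ σ : (Σ b : Fin (w+1), {g : Fin (b:ℕ) → ℕ // Antitone g}),
      ENNReal.ofReal (D (conjP ((Equiv.ofBijective (Phi w) (Phi_bijective w)) σ).1 1) *
        core q c w ((Equiv.ofBijective (Phi w) (Phi_bijective w)) σ).1)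
      = ENNReal.ofReal (D (σ.1:ℕ) * (bb q w (σ.1:ℕ) * q ^ ((σ.1:ℕ) * ((σ.1:ℕ) + c)))) *
          ENNReal.ofReal (core q c (σ.1:ℕ) σ.2.1) := by
    rintro ⟨b, g, hg⟩
    have hb : (b:ℕ) ≤ w := Nat.lt_succ_iff.mp b.isLt
    show ENNReal.ofReal (D (conjP (peel (b:ℕ) hb g) 1) * core q c w (peel (b:ℕ) hb g)) = _
    rw [conjP_peel_one hb g, core_peel hq0 hq1 c hb g]
    rw [show D (b:ℕ) * (bb q w (b:ℕ) * q ^ ((b:ℕ) * ((b:ℕ) + c)) * core q c (b:ℕ) g) =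
      (D (b:ℕ) * (bb q w (b:ℕ) * q ^ ((b:ℕ) * ((b:ℕ) + c)))) * core q c (b:ℕ) g by ring]
    apply ENNReal.ofReal_mul
    have := bb_nonneg hq0 hq1 w (b:ℕ)
    have := hD (b:ℕ)
    positivity
  have hinner : ∀ b : Fin (w+1),
      (∑' g : {g : Fin (b:ℕ) → ℕ // Antitone g},
        ENNReal.ofReal (D (b:ℕ) * (bb q w (b:ℕ) * q ^ ((b:ℕ) * ((b:ℕ) + c)))) *
          ENNReal.ofReal (core q c (b:ℕ) g.1))
      = ENNReal.ofReal (D (b:ℕ) * (bb q w (b:ℕ) * q ^ ((b:ℕ) * ((b:ℕ) + c)))) * Gb q c (b:ℕ) := by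
    intro b
    rw [ENNReal.tsum_mul_left]
    rfl
  rw [tsum_congr hpt, ENNReal.tsum_sigma']
  rw [tsum_congr hinner, tsum_fintype]
  exact Fin.sum_univ_eq_sum_range
    (fun b => ENNReal.ofReal (D b * (bb q w b * q ^ (b * (b + c)))) * Gb q c b) (w+1)
end F

section F2
open scoped ENNReal
variable {q : ℝ}

/-- upper bound on `core` by a geometric term -/
lemma core_le (hq0 : 0 < q) (hq1 : q < 1) (c b : ℕ) (g : Fin b → ℕ) :
    core q c b g ≤ (1 / pq q b ^ b) * q ^ (∑ j, g j) := by
  set N := Finset.univ.sup g with hN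
  set c1 := conjP g 1 with hc1
  set P := ∏ i ∈ Finset.Icc 1 N, pq q (conjP g i - conjP g (i + 1)) with hP
  have hsum_d : ∑ i ∈ Finset.Icc 1 N, (conjP g i - conjP g (i + 1)) = c1 := by
    have h0 : conjP g (N + 1) = 0 := conjP_sup_succ g (by omega)
    rw [sum_sub_telescope (conjP_anti g) N, h0]
    omega
  have hd_le : ∀ i, conjP g i - conjP g (i+1) ≤ b := fun i => le_trans (Nat.sub_le _ _) (conjP_le g i)
  have hPb : pq q b ^ b ≤ P := by
    have h1 : pq q b ^ b ≤ pq q b ^ c1 :=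
      pow_le_pow_of_le_one (pq_pos hq0 hq1 b).le (pq_le_one hq0 hq1 b) (hc1 ▸ conjP_le g 1)
    have h2 : pq q b ^ c1 ≤ P := by
      rw [← hsum_d, ← Finset.prod_pow_eq_pow_sum]
      apply Finset.prod_le_prod
      · intro i _
        exact pow_nonneg (pq_pos hq0 hq1 b).le _
      · intro i _
        exact pq_pow_le hq0 hq1 (hd_le i)
    linarith
  have hqe : q ^ (∑ i ∈ Finset.Icc 1 N, (conjP g i) ^ 2 +
      c * ∑ i ∈ Finset.Icc 1 N, conjP g i) ≤ q ^ (∑ j, g j) := by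
    apply pow_le_pow_of_le_one hq0.le hq1.le
    have hS1 : ∑ i ∈ Finset.Icc 1 N, conjP g i = ∑ j, g j :=
      sum_conjP (fun j => Finset.le_sup (Finset.mem_univ j))
    have hS2 : ∑ i ∈ Finset.Icc 1 N, conjP g i ≤ ∑ i ∈ Finset.Icc 1 N, (conjP g i) ^ 2 :=
      Finset.sum_le_sum (fun i _ => Nat.le_self_pow (by omega) _)
    omega
  unfold core
  rw [← hN, ← hc1, ← hP]
  have hPpos : 0 < P := by
    rw [hP]
    exact Finset.prod_pos (fun i _ => pq_pos hq0 hq1 _)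
  have hden : pq q b * pq q b ^ b ≤ pq q (b - c1) * P := by
    have := pq_antitone hq0 hq1 (Nat.sub_le b c1)
    have h0 : (0:ℝ) < pq q b ^ b := pow_pos (pq_pos hq0 hq1 b) b
    have := pq_pos hq0 hq1 (b - c1)
    nlinarith [pq_pos hq0 hq1 b]
  have hfrac : pq q b / (pq q (b - c1) * P) ≤ 1 / pq q b ^ b := by
    rw [div_le_div_iff₀ (mul_pos (pq_pos hq0 hq1 (b - c1)) hPpos)
      (pow_pos (pq_pos hq0 hq1 b) b)]
    have := pq_le_one hq0 hq1 b
    nlinarith [pq_pos hq0 hq1 b, pow_pos (pq_pos hq0 hq1 b) b]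
  have h1 : (0:ℝ) ≤ pq q b / (pq q (b - c1) * P) :=
    div_nonneg (pq_pos hq0 hq1 b).le (mul_pos (pq_pos hq0 hq1 (b - c1)) hPpos).le
  have h2 : (0:ℝ) ≤ q ^ (∑ j, g j) := by positivity
  calc pq q b / (pq q (b - c1) * P) * q ^ (∑ i ∈ Finset.Icc 1 N, (conjP g i) ^ 2 +
        c * ∑ i ∈ Finset.Icc 1 N, conjP g i)
      ≤ pq q b / (pq q (b - c1) * P) * q ^ (∑ j, g j) := by
        exact mul_le_mul_of_nonneg_left hqe h1
  _ ≤ (1 / pq q b ^ b) * q ^ (∑ j, g j) := mul_le_mul_of_nonneg_right hfrac h2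

/-- geometric sums over tuples are finite -/
lemma tsum_geom_pi (hq0 : 0 < q) (hq1 : q < 1) :
    ∀ b : ℕ, (∑' f : Fin b → ℕ, ENNReal.ofReal (q ^ (∑ j, f j))) ≠ ⊤ := by
  have hgeom : (∑' k : ℕ, ENNReal.ofReal (q ^ k)) ≠ ⊤ := by
    have h1 : ∀ k : ℕ, ENNReal.ofReal (q ^ k) = (ENNReal.ofReal q) ^ k := fun k =>
      ENNReal.ofReal_pow hq0.le k
    rw [tsum_congr h1, ENNReal.tsum_geometric]
    have hlt : ENNReal.ofReal q < 1 := ENNReal.ofReal_lt_one.mpr hq1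
    rw [ENNReal.inv_ne_top]
    exact (tsub_pos_of_lt hlt).ne'
  intro b
  induction b with
  | zero =>
      rw [tsum_eq_single (fun j => j.elim0) (fun f' hne => absurd (funext fun j => j.elim0) hne)]
      exact ENNReal.ofReal_ne_top
  | succ b ih =>
      rw [← Equiv.tsum_eq (Fin.consEquiv fun _ => ℕ)
        (fun f : Fin (b+1) → ℕ => ENNReal.ofReal (q ^ (∑ j, f j)))]
      have hpt : ∀ p : ℕ × (Fin b → ℕ),
          ENNReal.ofReal (q ^ (∑ j, ((Fin.consEquiv fun _ => ℕ) p) j)) =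
          ENNReal.ofReal (q ^ p.1) * ENNReal.ofReal (q ^ (∑ j, p.2 j)) := by
        rintro ⟨a, f⟩
        have hs : ∑ j, ((Fin.consEquiv fun _ => ℕ) (a, f)) j = a + ∑ j, f j := by
          rw [Fin.sum_univ_succ]
          simp [Fin.consEquiv]
        rw [hs, pow_add, ENNReal.ofReal_mul (by positivity)]
      rw [tsum_congr hpt, ENNReal.tsum_prod']
      have hin : ∀ a : ℕ, (∑' f : Fin b → ℕ,
          ENNReal.ofReal (q ^ a) * ENNReal.ofReal (q ^ (∑ j, f j))) =
          ENNReal.ofReal (q ^ a) * ∑' f : Fin b → ℕ, ENNReal.ofReal (q ^ (∑ j, f j)) :=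
        fun a => ENNReal.tsum_mul_left
      rw [tsum_congr hin, ENNReal.tsum_mul_right]
      exact ENNReal.mul_ne_top hgeom ih

set_option maxHeartbeats 1000000 in
lemma Gb_ne_top (hq0 : 0 < q) (hq1 : q < 1) (c b : ℕ) : Gb q c b ≠ ⊤ := by
  have hb1 : Gb q c b ≤ ∑' g : {g : Fin b → ℕ // Antitone g},
      ENNReal.ofReal ((1 / pq q b ^ b) * q ^ (∑ j, g.1 j)) :=
    ENNReal.tsum_le_tsum (fun g => ENNReal.ofReal_le_ofReal (core_le hq0 hq1 c b g.1))
  have hb2 : (∑' g : {g : Fin b → ℕ // Antitone g},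
      ENNReal.ofReal ((1 / pq q b ^ b) * q ^ (∑ j, g.1 j))) =
      ENNReal.ofReal (1 / pq q b ^ b) * ∑' g : {g : Fin b → ℕ // Antitone g},
        ENNReal.ofReal (q ^ (∑ j, g.1 j)) := by
    rw [← ENNReal.tsum_mul_left]
    apply tsum_congr
    intro g
    rw [ENNReal.ofReal_mul (le_of_lt (by
      have := pow_pos (pq_pos hq0 hq1 b) b
      positivity))]
  have hb3 : (∑' g : {g : Fin b → ℕ // Antitone g}, ENNReal.ofReal (q ^ (∑ j, g.1 j))) ≤
      ∑' f : Fin b → ℕ, ENNReal.ofReal (q ^ (∑ j, f j)) :=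
    ENNReal.tsum_comp_le_tsum_of_injective Subtype.val_injective
      (fun h : Fin b → ℕ => ENNReal.ofReal (q ^ (∑ j, h j)))
  apply ne_top_of_le_ne_top _ (hb1.trans (le_of_eq hb2 |>.trans
    (mul_le_mul_right hb3 _)))
  exact ENNReal.mul_ne_top ENNReal.ofReal_ne_top (tsum_geom_pi hq0 hq1 b)
end F2

section F3
open scoped ENNReal
variable {q : ℝ}

lemma Gb_zero (hq0 : 0 < q) (hq1 : q < 1) (c : ℕ) : Gb q c 0 = 1 := by
  unfold Gb
  rw [tsum_eq_single (⟨fun j => j.elim0, fun a b _ => le_of_eq (congrArg _ (a.elim0))⟩ :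
      {g : Fin 0 → ℕ // Antitone g})]
  · rw [core_zero_width hq0 hq1 c]
    exact ENNReal.ofReal_one
  · intro g' hne
    exact absurd (Subtype.ext (funext fun j => j.elim0)) hne

/-- recursion satisfied by the closed form, from `W_eq_one` -/
lemma V_rec (hq0 : 0 < q) (hq1 : q < 1) (c b : ℕ) :
    pq q c / pq q (c + b) =
      ∑ k ∈ Finset.range (b + 1), bb q b k * q ^ (k * (k + c)) * (pq q c / pq q (c + k)) := by
  have hP : ∀ k ∈ Finset.range (b + 1),
      (∏ j ∈ Finset.range (b - k), (1 - q ^ (c + k + 1 + j))) = pq q (c + b) / pq q (c + k) := by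
    intro k hk
    rw [Finset.mem_range] at hk
    have hadd := pq_add q (c + k) (b - k)
    rw [show c + k + (b - k) = c + b by omega] at hadd
    rw [eq_div_iff (pq_ne hq0 hq1 (c + k))]
    rw [hadd]
    ring
  have hW := W_eq_one hq0 hq1 b c
  have hterm : ∀ k ∈ Finset.range (b + 1),
      bb q b k * q ^ (k * (k + c)) * (pq q c / pq q (c + k)) =
      (pq q c / pq q (c + b)) * (bb q b k * q ^ (k * (k + c)) *
        ∏ j ∈ Finset.range (b - k), (1 - q ^ (c + k + 1 + j))) := by
    intro k hk
    rw [hP k hk]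
    have h1 := pq_ne hq0 hq1 (c + k)
    have h2 := pq_ne hq0 hq1 (c + b)
    field_simp
  rw [Finset.sum_congr rfl hterm, ← Finset.mul_sum, hW, mul_one]

/-- the closed form for `Gb` -/
lemma Gb_eq (hq0 : 0 < q) (hq1 : q < 1) (c : ℕ) :
    ∀ b, Gb q c b = ENNReal.ofReal (pq q c / pq q (c + b)) := by
  intro b
  induction b using Nat.strong_induction_on with
  | _ b ih =>
    rcases Nat.eq_zero_or_pos b with hb0 | hb1
    · subst hb0
      rw [Gb_zero hq0 hq1 c, add_zero, div_self (pq_ne hq0 hq1 c), ENNReal.ofReal_one]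
    · -- the recursion
      have hrec := tsum_peel hq0 hq1 c b (fun _ => (1:ℝ)) (fun _ => zero_le_one)
      have hGb : Gb q c b = ∑ k ∈ Finset.range (b + 1),
          ENNReal.ofReal (bb q b k * q ^ (k * (k + c))) * Gb q c k := by
        unfold Gb
        rw [show (fun g : {g : Fin b → ℕ // Antitone g} => ENNReal.ofReal (core q c b g.1)) =
          (fun g : {g : Fin b → ℕ // Antitone g} =>
            ENNReal.ofReal ((fun _ => (1:ℝ)) (conjP g.1 1) * core q c b g.1)) by
          funext g
          rw [one_mul]]
        rw [hrec]
        apply Finset.sum_congr rfl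
        intro k _
        rw [one_mul]
        rfl
      -- substitute the IH for k < b and split off the top term
      set V : ℕ → ℝ := fun k => pq q c / pq q (c + k) with hV
      have hV0 : ∀ k, 0 ≤ V k := fun k =>
        div_nonneg (pq_pos hq0 hq1 c).le (pq_pos hq0 hq1 (c + k)).le
      rw [Finset.sum_range_succ] at hGb
      have hsmall : ∀ k ∈ Finset.range b,
          ENNReal.ofReal (bb q b k * q ^ (k * (k + c))) * Gb q c k =
          ENNReal.ofReal (bb q b k * q ^ (k * (k + c)) * V k) := by
        intro k hk
        rw [Finset.mem_range] at hk
        rw [ih k hk, ← ENNReal.ofReal_mul (by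
          have := bb_nonneg hq0 hq1 b k
          positivity)]
      rw [Finset.sum_congr rfl hsmall] at hGb
      rw [← ENNReal.ofReal_sum_of_nonneg (fun k hk => by
        have := bb_nonneg hq0 hq1 b k
        have := hV0 k
        positivity)] at hGb
      -- realify
      set x := (Gb q c b).toReal with hx
      have hxofReal : Gb q c b = ENNReal.ofReal x :=
        (ENNReal.ofReal_toReal (Gb_ne_top hq0 hq1 c b)).symm
      have hx0 : 0 ≤ x := ENNReal.toReal_nonneg
      rw [hxofReal, bb_self hq0 hq1] at hGb
      rw [← ENNReal.ofReal_mul (by positivity), one_mul] at hGb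
      rw [← ENNReal.ofReal_add (by
        apply Finset.sum_nonneg
        intro k hk
        have := bb_nonneg hq0 hq1 b k
        have := hV0 k
        positivity) (by positivity)] at hGb
      have hxeq : x = (∑ k ∈ Finset.range b, bb q b k * q ^ (k * (k + c)) * V k)
          + q ^ (b * (b + c)) * x := by
        rw [← ENNReal.ofReal_eq_ofReal_iff hx0 (by
          have : (0:ℝ) ≤ ∑ k ∈ Finset.range b, bb q b k * q ^ (k * (k + c)) * V k := by
            apply Finset.sum_nonneg
            intro k hk
            have := bb_nonneg hq0 hq1 b k
            have := hV0 k
            positivity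
          positivity)]
        exact hGb
      -- the closed form satisfies the same recursion
      have hVrec := V_rec hq0 hq1 c b
      rw [Finset.sum_range_succ, bb_self hq0 hq1, one_mul] at hVrec
      have hVb : V b = (∑ k ∈ Finset.range b, bb q b k * q ^ (k * (k + c)) * V k)
          + q ^ (b * (b + c)) * V b := by
        rw [hV]
        exact hVrec
      -- solve
      have ht : q ^ (b * (b + c)) < 1 :=
        pow_lt_one₀ hq0.le hq1 (by positivity)
      have hxV : x = V b := by nlinarith [hxeq, hVb]
      rw [hxofReal, hxV]
end F3

/-- The non-Archimedean weight
`dh^K(p^{-λ}) = [m choose m-λ'₁,λ'₁-λ'₂,…]·([n-m]!/([m-λ'₁]![n-2m]!))/[n choose m]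
· Q^{-∑(λ'_i)²-(n-2m)∑λ'_i}`. -/
noncomputable def dhK (Q : ℝ) (n m : ℕ) (lam : Fin m → ℕ) : ℝ :=
  (brFact Q m / (brFact Q (m - conjP lam 1) *
      ∏ i ∈ Finset.Icc 1 (Finset.univ.sup lam), brFact Q (conjP lam i - conjP lam (i + 1)))) *
    (brFact Q (n - m) / (brFact Q (m - conjP lam 1) * brFact Q (n - 2 * m))) /
    (brFact Q n / (brFact Q m * brFact Q (n - m))) *
    Q⁻¹ ^ (∑ i ∈ Finset.Icc 1 (Finset.univ.sup lam), (conjP lam i) ^ 2 +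
      (n - 2 * m) * ∑ i ∈ Finset.Icc 1 (Finset.univ.sup lam), conjP lam i)

section G
open scoped ENNReal

lemma dhK_eq (Q : ℝ) (n m : ℕ) (f : Fin m → ℕ) :
    dhK Q n m f =
      (pq Q⁻¹ (n - m) / (pq Q⁻¹ (m - conjP f 1) * pq Q⁻¹ (n - 2 * m))) /
        (pq Q⁻¹ n / (pq Q⁻¹ m * pq Q⁻¹ (n - m))) * core Q⁻¹ (n - 2 * m) m f := by
  unfold dhK core
  simp only [brFact_eq_pq]
  ring

lemma core_nonneg {q : ℝ} (hq0 : 0 < q) (hq1 : q < 1) (c w : ℕ) (f : Fin w → ℕ) :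
    0 ≤ core q c w f := by
  unfold core
  have h1 := pq_pos hq0 hq1 w
  have h2 := pq_pos hq0 hq1 (w - conjP f 1)
  have h3 : (0:ℝ) < ∏ i ∈ Finset.Icc 1 (Finset.univ.sup f),
      pq q (conjP f i - conjP f (i + 1)) :=
    Finset.prod_pos (fun i _ => pq_pos hq0 hq1 _)
  positivity

/-- the final finite identity, from q-Vandermonde -/
lemma final_sum {q : ℝ} (hq0 : 0 < q) (hq1 : q < 1) (n m : ℕ) (hm : 1 ≤ m)
    (hnm : 2 * m ≤ n) :
    ∑ b ∈ Finset.range (m + 1),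
      ((pq q (n - m) / (pq q (m - b) * pq q (n - 2 * m))) /
          (pq q n / (pq q m * pq q (n - m))) * (bb q m b * q ^ (b * (b + (n - 2 * m))))) *
        (pq q (n - 2 * m) / pq q ((n - 2 * m) + b)) = 1 := by
  have hterm : ∀ b ∈ Finset.range (m + 1),
      ((pq q (n - m) / (pq q (m - b) * pq q (n - 2 * m))) /
          (pq q n / (pq q m * pq q (n - m))) * (bb q m b * q ^ (b * (b + (n - 2 * m))))) *
        (pq q (n - 2 * m) / pq q ((n - 2 * m) + b)) =
      (pq q m * pq q (n - m) / pq q n) *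
        (bb q m b * bb q (n - m) (m - b) * q ^ (b * ((n - m) - m + b))) := by
    intro b hb
    rw [Finset.mem_range] at hb
    have hbm : b ≤ m := by omega
    rw [bb_eq q (show m - b ≤ n - m by omega)]
    rw [show (n - m) - (m - b) = (n - 2 * m) + b by omega]
    rw [show (n - m) - m + b = b + (n - 2 * m) by omega]
    have h1 := pq_ne hq0 hq1 (m - b)
    have h2 := pq_ne hq0 hq1 (n - 2 * m)
    have h3 := pq_ne hq0 hq1 n
    have h4 := pq_ne hq0 hq1 m
    have h5 := pq_ne hq0 hq1 (n - m)
    have h6 := pq_ne hq0 hq1 ((n - 2 * m) + b)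
    field_simp
  rw [Finset.sum_congr rfl hterm, ← Finset.mul_sum]
  have hvm := vmonde hq0 hq1 (n - m) m m (by omega)
  rw [hvm, show m + (n - m) = n by omega, bb_eq q (show m ≤ n by omega)]
  have h3 := pq_ne hq0 hq1 n
  have h4 := pq_ne hq0 hq1 m
  have h5 := pq_ne hq0 hq1 (n - m)
  field_simp

/-- The non-Archimedean weights `dh^K(p^{-λ})`, `λ ∈ Λ_m`, have total mass 1. -/
theorem stmt15 (p r : ℕ) (hp : p.Prime) (hr : 1 ≤ r) (Q : ℝ) (hQ : Q = (p : ℝ) ^ r)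
    (n m : ℕ) (hm : 1 ≤ m) (hnm : 2 * m ≤ n) :
    ∑' lam : {f : Fin m → ℕ // Antitone f}, dhK Q n m lam.1 = 1 := by
  have hp2 : (2:ℝ) ≤ (p:ℝ) := by exact_mod_cast hp.two_le
  have hQ1 : 1 < Q := by
    rw [hQ]
    calc (1:ℝ) = 1 ^ r := (one_pow r).symm
    _ < (p:ℝ) ^ r := by
        apply pow_lt_pow_left₀ (by linarith) (by norm_num)
        omega
  have hQ0 : 0 < Q := by linarith
  have hq0 : 0 < Q⁻¹ := inv_pos.mpr hQ0
  have hq1 : Q⁻¹ < 1 := by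
    rw [inv_lt_one_iff₀]
    right
    exact hQ1
  have hDpos : ∀ b : ℕ, 0 ≤ (pq Q⁻¹ (n - m) / (pq Q⁻¹ (m - b) * pq Q⁻¹ (n - 2 * m))) /
      (pq Q⁻¹ n / (pq Q⁻¹ m * pq Q⁻¹ (n - m))) := by
    intro b
    have h1 := pq_pos hq0 hq1 (n - m)
    have h2 := pq_pos hq0 hq1 (m - b)
    have h3 := pq_pos hq0 hq1 (n - 2 * m)
    have h4 := pq_pos hq0 hq1 n
    have h5 := pq_pos hq0 hq1 m
    positivity
  have hdh0 : ∀ lam : {f : Fin m → ℕ // Antitone f}, 0 ≤ dhK Q n m lam.1 := by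
    intro lam
    rw [dhK_eq Q n m lam.1]
    exact mul_nonneg (hDpos _) (core_nonneg hq0 hq1 _ _ _)
  have hT : ∑' lam : {f : Fin m → ℕ // Antitone f},
      ENNReal.ofReal (dhK Q n m lam.1) = 1 := by
    rw [tsum_congr (fun lam : {f : Fin m → ℕ // Antitone f} => by
      rw [dhK_eq Q n m lam.1] :
      ∀ lam : {f : Fin m → ℕ // Antitone f}, ENNReal.ofReal (dhK Q n m lam.1) =
        ENNReal.ofReal ((pq Q⁻¹ (n - m) / (pq Q⁻¹ (m - conjP lam.1 1) * pq Q⁻¹ (n - 2 * m))) /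
          (pq Q⁻¹ n / (pq Q⁻¹ m * pq Q⁻¹ (n - m))) * core Q⁻¹ (n - 2 * m) m lam.1))]
    rw [tsum_peel hq0 hq1 (n - 2 * m) m
      (fun b => (pq Q⁻¹ (n - m) / (pq Q⁻¹ (m - b) * pq Q⁻¹ (n - 2 * m))) /
        (pq Q⁻¹ n / (pq Q⁻¹ m * pq Q⁻¹ (n - m)))) hDpos]
    have h2 : ∀ b ∈ Finset.range (m + 1),
        ENNReal.ofReal ((pq Q⁻¹ (n - m) / (pq Q⁻¹ (m - b) * pq Q⁻¹ (n - 2 * m))) /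
          (pq Q⁻¹ n / (pq Q⁻¹ m * pq Q⁻¹ (n - m))) *
            (bb Q⁻¹ m b * Q⁻¹ ^ (b * (b + (n - 2 * m))))) * Gb Q⁻¹ (n - 2 * m) b =
        ENNReal.ofReal (((pq Q⁻¹ (n - m) / (pq Q⁻¹ (m - b) * pq Q⁻¹ (n - 2 * m))) /
          (pq Q⁻¹ n / (pq Q⁻¹ m * pq Q⁻¹ (n - m))) *
            (bb Q⁻¹ m b * Q⁻¹ ^ (b * (b + (n - 2 * m))))) *
          (pq Q⁻¹ (n - 2 * m) / pq Q⁻¹ ((n - 2 * m) + b))) := by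
      intro b _
      rw [Gb_eq hq0 hq1 (n - 2 * m) b, ← ENNReal.ofReal_mul (by
        have h1 := bb_nonneg hq0 hq1 m b
        have h6 := hDpos b
        positivity)]
    rw [Finset.sum_congr rfl h2, ← ENNReal.ofReal_sum_of_nonneg (fun b _ => by
      have h1 := bb_nonneg hq0 hq1 m b
      have h6 := hDpos b
      have h7 := pq_pos hq0 hq1 (n - 2 * m)
      have h8 := pq_pos hq0 hq1 ((n - 2 * m) + b)
      positivity)]
    rw [final_sum hq0 hq1 n m hm hnm, ENNReal.ofReal_one]
  calc ∑' lam : {f : Fin m → ℕ // Antitone f}, dhK Q n m lam.1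
      = ∑' lam : {f : Fin m → ℕ // Antitone f},
          (ENNReal.ofReal (dhK Q n m lam.1)).toReal :=
        tsum_congr (fun lam => (ENNReal.toReal_ofReal (hdh0 lam)).symm)
    _ = (∑' lam : {f : Fin m → ℕ // Antitone f},
          ENNReal.ofReal (dhK Q n m lam.1)).toReal :=
        (ENNReal.tsum_toReal_eq (fun _ => ENNReal.ofReal_ne_top)).symm
    _ = (1 : ℝ≥0∞).toReal := by rw [hT]
    _ = 1 := ENNReal.toReal_one
end G
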